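/- Let Σ be a finite root system in a Euclidean space V with Weyl group W, let r be a linear automorphism of V stabilizing Σ and a chamber 𝔠 of Σ, and let L = V^r be the fixed space of r. Suppose α₁, …, α_n ∈ Σ are roots whose restrictions to L are linearly independent functionals on L spanning the annihilator in L* of a subspace V₀ ⊆ L, and let w₀ = s₁⋯s_n be the product of the corresponding reflections. If H ∈ closure(𝔠) is fixed by r·w₀, then H is fixed by w₀, and moreover α_i(H) = 0 for all i, so that H ∈ V₀. -/

import Mathlib

set_option maxHeartbeats 1000000


open scoped RealInnerProductSpace

/-- The reflection in the hyperplane orthogonal to a root `α`. -/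
noncomputable def reflRoot {n : ℕ} (α : EuclideanSpace ℝ (Fin n)) :
    EuclideanSpace ℝ (Fin n) ≃ₗᵢ[ℝ] EuclideanSpace ℝ (Fin n) :=
  Submodule.reflection ((ℝ ∙ α)ᗮ)

/-- The set of regular points for the root set `S`. -/
def regularSet {n : ℕ} (S : Finset (EuclideanSpace ℝ (Fin n))) :
    Set (EuclideanSpace ℝ (Fin n)) :=
  {x | ∀ α ∈ S, ⟪α, x⟫ ≠ 0}

/-- A chamber of `S` is a connected component of the set of regular points. -/
def IsChamber {n : ℕ} (S : Finset (EuclideanSpace ℝ (Fin n)))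
    (c : Set (EuclideanSpace ℝ (Fin n))) : Prop :=
  ∃ x ∈ regularSet S, c = connectedComponentIn (regularSet S) x

/-- The fixed subspace of a linear isometry. -/
noncomputable def fixedSpace {n : ℕ}
    (r : EuclideanSpace ℝ (Fin n) ≃ₗᵢ[ℝ] EuclideanSpace ℝ (Fin n)) :
    Submodule ℝ (EuclideanSpace ℝ (Fin n)) :=
  LinearMap.ker ((r.toLinearEquiv : EuclideanSpace ℝ (Fin n) →ₗ[ℝ]
    EuclideanSpace ℝ (Fin n)) - LinearMap.id)

lemma reflRoot_sub_mem {n : ℕ} (β x : EuclideanSpace ℝ (Fin n)) :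
    reflRoot β x - x ∈ (ℝ ∙ β) := by
  have h := Submodule.sub_starProjection_mem_orthogonal (K := (ℝ ∙ β)ᗮ) x
  rw [Submodule.orthogonal_orthogonal] at h
  have : reflRoot β x - x = (-2 : ℝ) • (x - (ℝ ∙ β)ᗮ.starProjection x) := by
    rw [reflRoot, Submodule.reflection_apply]
    push_cast
    ring_nf
    module
  rw [this]
  exact Submodule.smul_mem _ _ h

lemma prod_sub_mem {n m : ℕ} (α : Fin m → EuclideanSpace ℝ (Fin n))
    (x : EuclideanSpace ℝ (Fin n)) :
    (List.ofFn fun i => reflRoot (α i)).prod x - x ∈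
      Submodule.span ℝ (Set.range α) := by
  induction m generalizing x with
  | zero => simp
  | succ m ih =>
    rw [List.ofFn_succ, List.prod_cons]
    set P := (List.ofFn fun i : Fin m => reflRoot (α i.succ)).prod with hP
    have h1 : P x - x ∈ Submodule.span ℝ (Set.range fun i : Fin m => α i.succ) := ih _ x
    have h2 : reflRoot (α 0) (P x) - P x ∈ (ℝ ∙ α 0) := reflRoot_sub_mem _ _
    have e : (reflRoot (α 0) * P) x - x =
        (reflRoot (α 0) (P x) - P x) + (P x - x) := by
      have : (reflRoot (α 0) * P) x = reflRoot (α 0) (P x) := rfl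
      rw [this]; abel
    rw [e]
    apply Submodule.add_mem
    · refine Submodule.span_mono ?_ h2
      rw [Set.singleton_subset_iff]; exact ⟨0, rfl⟩
    · refine Submodule.span_mono ?_ h1
      rintro _ ⟨i, rfl⟩; exact ⟨i.succ, rfl⟩

lemma key_indep {n : ℕ} : ∀ {m : ℕ} (α : Fin m → EuclideanSpace ℝ (Fin n)),
    (∀ i, α i ≠ 0) → LinearIndependent ℝ α →
    ∀ x : EuclideanSpace ℝ (Fin n),
    (List.ofFn fun i => reflRoot (α i)).prod x = x → ∀ i, ⟪α i, x⟫ = 0 := by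
  intro m
  induction m with
  | zero => intro α _ _ x _ i; exact absurd i.2 (by omega)
  | succ m ih =>
    intro α h0 hind x hx i
    rw [List.ofFn_succ, List.prod_cons] at hx
    set P := (List.ofFn fun i : Fin m => reflRoot (α i.succ)).prod with hP
    have hx' : reflRoot (α 0) (P x) = x := hx
    obtain ⟨htail, h0span⟩ := linearIndependent_fin_succ.mp hind
    have hu : P x - x ∈ Submodule.span ℝ (Set.range fun i : Fin m => α i.succ) :=
      prod_sub_mem _ x
    have hu2 : P x - x ∈ (ℝ ∙ α 0) := by
      have h2 : reflRoot (α 0) (P x) - P x ∈ (ℝ ∙ α 0) := reflRoot_sub_mem _ _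
      rw [hx'] at h2
      simpa using Submodule.neg_mem _ h2
    obtain ⟨c, hc⟩ := Submodule.mem_span_singleton.mp hu2
    have hc0 : c = 0 := by
      by_contra hne
      apply h0span
      have : α 0 = c⁻¹ • (P x - x) := by rw [← hc, smul_smul, inv_mul_cancel₀ hne, one_smul]
      rw [this]
      exact Submodule.smul_mem _ _ (by exact hu)
    have hPx : P x = x := by
      have h := hc; rw [hc0, zero_smul] at h
      have := sub_eq_zero.mp h.symm
      exact this
    have hrefl0 : reflRoot (α 0) x = x := by rw [hPx] at hx'; exact hx'
    have hmem : x ∈ (ℝ ∙ α 0)ᗮ := (Submodule.reflection_eq_self_iff x).mp hrefl0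
    refine Fin.cases ?_ ?_ i
    · exact hmem (α 0) (Submodule.mem_span_singleton_self _)
    · intro j
      exact ih (fun i => α i.succ) (fun i => h0 i.succ) htail x (by rw [hPx]) j

/-- Let `r` stabilize the root system `S` and a chamber `c`, let `L` be the fixed
space of `r`, and let `α₁, …, α_m ∈ S` have restrictions to `L` that are linearly
independent functionals spanning the annihilator in `L*` of a subspace `V₀ ⊆ L`.
If `H` lies in the closure of `c` and is fixed by `r·w₀`, where `w₀ = s₁⋯s_m` is
the product of the corresponding reflections, then `H` is fixed by `w₀`, every
`α_i(H) = 0`, and `H ∈ V₀`. -/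
theorem stmt9 {n m : ℕ} (S : Finset (EuclideanSpace ℝ (Fin n)))
    (hS0 : (0 : EuclideanSpace ℝ (Fin n)) ∉ S)
    (hSrefl : ∀ α ∈ S, ∀ β ∈ S, reflRoot α β ∈ S)
    (r : EuclideanSpace ℝ (Fin n) ≃ₗᵢ[ℝ] EuclideanSpace ℝ (Fin n))
    (hrS : ∀ α ∈ S, r α ∈ S)
    (c : Set (EuclideanSpace ℝ (Fin n))) (hc : IsChamber S c) (hrc : ⇑r '' c = c)
    (α : Fin m → EuclideanSpace ℝ (Fin n)) (hαS : ∀ i, α i ∈ S)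
    (hind : LinearIndependent ℝ
      (fun i => ((innerSL ℝ (α i)).toLinearMap).domRestrict (fixedSpace r)))
    (V₀ : Submodule ℝ (EuclideanSpace ℝ (Fin n))) (hV₀L : V₀ ≤ fixedSpace r)
    (hann : ∀ H : EuclideanSpace ℝ (Fin n),
      H ∈ V₀ ↔ (r H = H ∧ ∀ i, ⟪α i, H⟫ = 0))
    (H : EuclideanSpace ℝ (Fin n)) (hH : H ∈ closure c)
    (hfix : r ((List.ofFn fun i => reflRoot (α i)).prod H) = H) :
    (List.ofFn fun i => reflRoot (α i)).prod H = H ∧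
      (∀ i, ⟪α i, H⟫ = 0) ∧ H ∈ V₀ := by
  classical
  have hLmem : ∀ x : EuclideanSpace ℝ (Fin n), x ∈ fixedSpace r ↔ r x = x := by
    intro x
    simp [fixedSpace, LinearMap.mem_ker, sub_eq_zero, LinearMap.sub_apply]
  set w := (List.ofFn fun i => reflRoot (α i)).prod with hw
  have hspan : w H - H ∈ Submodule.span ℝ (Set.range α) := prod_sub_mem α H
  have hrv : r (w H - H) = H - r H := by rw [map_sub, hfix]
  have horth : ∀ x : fixedSpace r, ⟪w H - H, (x : EuclideanSpace ℝ (Fin n))⟫ = 0 := by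
    intro x
    have hx : r (x : EuclideanSpace ℝ (Fin n)) = x := (hLmem x).mp x.2
    have h1 : ⟪w H - H, (x : EuclideanSpace ℝ (Fin n))⟫
        = ⟪r (w H - H), r (x : EuclideanSpace ℝ (Fin n))⟫ := (r.inner_map_map _ _).symm
    have h2 : ⟪r H, (x : EuclideanSpace ℝ (Fin n))⟫
        = ⟪H, (x : EuclideanSpace ℝ (Fin n))⟫ := by
      conv_lhs => rw [← hx]
      exact r.inner_map_map H x
    rw [hx, hrv, inner_sub_left, inner_sub_left, h2] at h1
    rw [inner_sub_left, h1]; ring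
  obtain ⟨cf, hcf⟩ := (Submodule.mem_span_range_iff_exists_fun ℝ).mp hspan
  have hc0 : ∀ i, cf i = 0 := by
    have hzero : ∑ i, cf i • ((innerSL ℝ (α i)).toLinearMap.domRestrict (fixedSpace r)) = 0 := by
      ext x
      simp only [LinearMap.coe_sum, Finset.sum_apply, LinearMap.smul_apply,
        LinearMap.domRestrict_apply, ContinuousLinearMap.coe_coe,
        innerSL_apply_apply, smul_eq_mul, LinearMap.zero_apply]
      have e1 : ∑ i, cf i * ⟪α i, (x : EuclideanSpace ℝ (Fin n))⟫
          = ⟪∑ i, cf i • α i, (x : EuclideanSpace ℝ (Fin n))⟫ := by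
        rw [sum_inner]
        exact Finset.sum_congr rfl fun i _ => (real_inner_smul_left _ _ _).symm
      rw [e1, hcf]
      exact horth x
    exact Fintype.linearIndependent_iff.mp hind cf hzero
  have hv0 : w H - H = 0 := by
    rw [← hcf]
    simp [hc0]
  have hwHH : w H = H := by
    have := sub_eq_zero.mp hv0
    exact this
  have hrH : r H = H := by
    have h := hfix
    rw [hwHH] at h
    exact h
  have hαind : LinearIndependent ℝ α := by
    let T : EuclideanSpace ℝ (Fin n) →ₗ[ℝ] (fixedSpace r →ₗ[ℝ] ℝ) :=
      { toFun := fun β => (innerSL ℝ β).toLinearMap.domRestrict (fixedSpace r)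
        map_add' := by intros; ext x; simp [inner_add_left]
        map_smul' := by intros; ext x; simp [real_inner_smul_left] }
    exact LinearIndependent.of_comp T hind
  have h0 : ∀ i, α i ≠ 0 := fun i h => hS0 (h ▸ hαS i)
  have hinner := key_indep α h0 hαind H hwHH
  exact ⟨hwHH, hinner, (hann H).mpr ⟨hrH, hinner⟩⟩
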